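/- Let C be a linear code over F_q, and let w_0 and w_∞ be the minimum and maximum Hamming weights among nonzero codewords of C. If w_0/w_∞ > (q−1)/q, then C is minimal; i.e., for any codewords c, c' ∈ C with supp(c') ⊆ supp(c) and c ≠ 0, there exists α ∈ F_q with c' = α·c. -/

import Mathlib

theorem stmt13 (q n w₀ w₁ : ℕ) (hq : IsPrimePow q)
    (F : Type) [Field F] [Fintype F] [DecidableEq F] (hF : Fintype.card F = q)
    (C : Submodule F (Fin n → F))
    (hmin : IsLeast {w : ℕ | ∃ c ∈ C, c ≠ 0 ∧ hammingNorm c = w} w₀)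
    (hmax : IsGreatest {w : ℕ | ∃ c ∈ C, c ≠ 0 ∧ hammingNorm c = w} w₁)
    (hab : (q - 1) * w₁ < q * w₀) :
    ∀ c ∈ C, ∀ c' ∈ C, c ≠ 0 → (∀ i, c' i ≠ 0 → c i ≠ 0) →
      ∃ α : F, c' = α • c := by
  intro c hc c' hc' hcne hsupp
  by_contra hcon
  push_neg at hcon
  have key : ∀ a : F, c' - a • c ≠ 0 := by
    intro a h
    exact hcon a (by rwa [sub_eq_zero] at h)
  have mem : ∀ a : F, c' - a • c ∈ C := fun a => C.sub_mem hc' (C.smul_mem a hc)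
  have hw0 : ∀ a : F, w₀ ≤ hammingNorm (c' - a • c) :=
    fun a => hmin.2 ⟨_, mem a, key a, rfl⟩
  have hwc : hammingNorm c ≤ w₁ := hmax.2 ⟨c, hc, hcne, rfl⟩
  -- the key counting identity
  have inner : ∀ i : Fin n,
      (∑ a : F, if (c' - a • c) i ≠ 0 then 1 else 0) = (q - 1) * (if c i ≠ 0 then 1 else 0) := by
    intro i
    by_cases hci : c i = 0
    · have hci' : c' i = 0 := by
        by_contra h; exact hsupp i h hci
      simp [hci, hci']
    · simp only [hci, ne_eq, not_false_eq_true, if_true, mul_one, Pi.sub_apply,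
        Pi.smul_apply, smul_eq_mul]
      have heq : ∀ a : F, (¬ c' i - a * c i = 0) ↔ a ≠ c' i * (c i)⁻¹ := by
        intro a
        rw [sub_eq_zero]
        constructor
        · intro h h'; subst h'; exact h (by field_simp)
        · intro h h'; exact h (by field_simp [h']; exact h'.symm)
      calc (∑ a : F, if ¬ c' i - a * c i = 0 then 1 else 0)
          = (Finset.univ.filter fun a : F => a ≠ c' i * (c i)⁻¹).card := by
            rw [Finset.card_filter]
            exact Finset.sum_congr rfl fun a _ => if_congr (heq a) rfl rfl
        _ = q - 1 := by
            rw [Finset.filter_ne', Finset.card_erase_of_mem (Finset.mem_univ _),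
              Finset.card_univ, hF]
  have hsum : ∑ a : F, hammingNorm (c' - a • c) = (q - 1) * hammingNorm c := by
    have hn : ∀ (v : Fin n → F), hammingNorm v = ∑ i : Fin n, if v i ≠ 0 then 1 else 0 := by
      intro v
      rw [hammingNorm, Finset.card_filter]
    calc ∑ a : F, hammingNorm (c' - a • c)
        = ∑ a : F, ∑ i : Fin n, if (c' - a • c) i ≠ 0 then 1 else 0 := by
          simp only [hn]
      _ = ∑ i : Fin n, ∑ a : F, if (c' - a • c) i ≠ 0 then 1 else 0 := Finset.sum_comm
      _ = ∑ i : Fin n, (q - 1) * (if c i ≠ 0 then 1 else 0) := by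
          exact Finset.sum_congr rfl fun i _ => inner i
      _ = (q - 1) * hammingNorm c := by
          rw [← Finset.mul_sum, hn]
  have h1 : q * w₀ ≤ (q - 1) * hammingNorm c := by
    rw [← hsum]
    calc q * w₀ = ∑ _a : F, w₀ := by
          rw [Finset.sum_const, Finset.card_univ, hF, smul_eq_mul]
      _ ≤ _ := Finset.sum_le_sum fun a _ => hw0 a
  have h2 : q * w₀ ≤ (q - 1) * w₁ := h1.trans (Nat.mul_le_mul_left _ hwc)
  exact absurd h2 (not_le.2 hab)
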